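/- Fix N ≥ 1, an index i ∈ {1,…,N}, a finite nonempty set 𝒩_i, and positive reals d_j (j ∈ 𝒩_i), K, B, p_k (k ∈ {1,…,N}), g_{k,j} (k ∈ {1,…,N}, j ∈ 𝒩_i), and σ² > 0. Define t_i : ℝ₊^N → ℝ by t_i(x) = Σ_{j∈𝒩_i} d_j / ( K·B·log₂(1 + p_i·g_{i,j} / (Σ_{k≠i} x_k·p_k·g_{k,j} + σ²)) ). Then for every x ∈ ℝ₊^N, lim_{t→∞} t_i(tx)/t = Σ_{j∈𝒩_i} (ln(2)·d_j / (K·B·p_i·g_{i,j})) · Σ_{k≠i} x_k·p_k·g_{k,j}. -/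

import Mathlib

open Filter Topology

lemma aux_term (d KB c S σ2 : ℝ) (hKB : 0 < KB) (hc : 0 < c) (hσ2 : 0 < σ2) (hS : 0 ≤ S) :
    Tendsto (fun t : ℝ => d / (KB * Real.logb 2 (1 + c / (t * S + σ2))) / t) atTop
      (𝓝 ((Real.log 2 * d / (KB * c)) * S)) := by
  have hlog2 : (0:ℝ) < Real.log 2 := Real.log_pos one_lt_two
  rcases eq_or_lt_of_le hS with hS0 | hSpos
  · simp only [← hS0, mul_zero, zero_add]
    exact tendsto_const_nhds.div_atTop tendsto_id
  · have hy : Tendsto (fun t : ℝ => t * S + σ2) atTop atTop :=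
      tendsto_atTop_add_const_right _ σ2 (tendsto_id.atTop_mul_const hSpos)
    have hA : Tendsto (fun t : ℝ => (t * S + σ2) * Real.log (1 + c / (t * S + σ2)))
        atTop (𝓝 c) := (Real.tendsto_mul_log_one_add_div_atTop c).comp hy
    have hu : Tendsto (fun t : ℝ => c / (t * S + σ2)) atTop (𝓝 0) :=
      tendsto_const_nhds.div_atTop hy
    have hB : Tendsto (fun t : ℝ => Real.log (1 + c / (t * S + σ2))) atTop (𝓝 0) := by
      have h1 : Tendsto (fun t : ℝ => 1 + c / (t * S + σ2)) atTop (𝓝 1) := by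
        simpa using tendsto_const_nhds.add hu
      have := (Real.continuousAt_log (by norm_num : (1:ℝ) ≠ 0)).tendsto.comp h1
      simpa [Function.comp_def] using this
    have hL : Tendsto (fun t : ℝ => t * Real.log (1 + c / (t * S + σ2))) atTop (𝓝 (c / S)) := by
      have h := (hA.sub (hB.const_mul σ2)).const_mul (1 / S)
      have heq : ∀ t : ℝ,
          (1 / S) * ((t * S + σ2) * Real.log (1 + c / (t * S + σ2))
            - σ2 * Real.log (1 + c / (t * S + σ2)))
          = t * Real.log (1 + c / (t * S + σ2)) := by
        intro t
        field_simp
        ring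
      have h2 := h.congr heq
      simpa [mul_comm, div_eq_mul_inv] using h2
    have hinv := (hL.inv₀ (by positivity : (c / S) ≠ 0)).const_mul (d * Real.log 2 / KB)
    have heq2 : (fun t : ℝ => d * Real.log 2 / KB
          * (t * Real.log (1 + c / (t * S + σ2)))⁻¹)
        =ᶠ[atTop] fun t : ℝ => d / (KB * Real.logb 2 (1 + c / (t * S + σ2))) / t := by
      filter_upwards [eventually_gt_atTop 0] with t ht
      have hden : 0 < t * S + σ2 := by positivity
      have hu0 : 0 < c / (t * S + σ2) := by positivity
      have hlogu : 0 < Real.log (1 + c / (t * S + σ2)) :=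
        Real.log_pos (by linarith)
      rw [Real.logb, div_div]
      field_simp
    have hfinal := Tendsto.congr' heq2 hinv
    have hval : d * Real.log 2 / KB * (c / S)⁻¹ = Real.log 2 * d / (KB * c) * S := by
      rw [inv_div]
      ring
    rwa [hval] at hfinal

theorem stmt_15 (N : ℕ) (hN : 1 ≤ N) (i : Fin N)
    (J : Type) [Fintype J] [Nonempty J]
    (d : J → ℝ) (hd : ∀ j, 0 < d j)
    (K B : ℝ) (hK : 0 < K) (hB : 0 < B)
    (p : Fin N → ℝ) (hp : ∀ k, 0 < p k)
    (g : Fin N → J → ℝ) (hg : ∀ k j, 0 < g k j)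
    (σ2 : ℝ) (hσ2 : 0 < σ2)
    (ti : (Fin N → ℝ) → ℝ)
    (hti : ∀ x : Fin N → ℝ, ti x = ∑ j : J,
      d j / (K * B * Real.logb 2
        (1 + p i * g i j / ((∑ k ∈ Finset.univ.erase i, x k * p k * g k j) + σ2))))
    (x : Fin N → ℝ) (hx : ∀ k, 0 ≤ x k) :
    Tendsto (fun t : ℝ => ti (t • x) / t) atTop
      (𝓝 (∑ j : J, (Real.log 2 * d j / (K * B * p i * g i j)) *
        ∑ k ∈ Finset.univ.erase i, x k * p k * g k j)) := by
  have h : ∀ j : J, Tendsto (fun t : ℝ =>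
      d j / (K * B * Real.logb 2 (1 + p i * g i j /
        (t * (∑ k ∈ Finset.univ.erase i, x k * p k * g k j) + σ2))) / t) atTop
      (𝓝 ((Real.log 2 * d j / (K * B * (p i * g i j))) *
        ∑ k ∈ Finset.univ.erase i, x k * p k * g k j)) := by
    intro j
    exact aux_term (d j) (K * B) (p i * g i j)
      (∑ k ∈ Finset.univ.erase i, x k * p k * g k j) σ2
      (mul_pos hK hB) (mul_pos (hp i) (hg i j)) hσ2
      (Finset.sum_nonneg fun k _ => by
        have := hx k; have := (hp k).le; have := (hg k j).le; positivity)
  have hsum := tendsto_finset_sum Finset.univ (fun j _ => h j)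
  have heq : ∀ t : ℝ, (∑ j : J,
      d j / (K * B * Real.logb 2 (1 + p i * g i j /
        (t * (∑ k ∈ Finset.univ.erase i, x k * p k * g k j) + σ2))) / t)
      = ti (t • x) / t := by
    intro t
    rw [hti, Finset.sum_div]
    refine Finset.sum_congr rfl fun j _ => ?_
    have hsumeq : ∑ k ∈ Finset.univ.erase i, (t • x) k * p k * g k j
        = t * ∑ k ∈ Finset.univ.erase i, x k * p k * g k j := by
      rw [Finset.mul_sum]
      refine Finset.sum_congr rfl fun k _ => ?_
      simp [smul_eq_mul]; ring
    rw [hsumeq]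
  have := hsum.congr heq
  convert this using 2
  exact Finset.sum_congr rfl fun j _ => by ring
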